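/- Let Φ be a quantum channel and Q⊥ the orthogonal projection onto the orthogonal complement of H₀ = range 𝒫(𝕀), where 𝒫 is the Cesàro projection. Then for all n, tr(Q⊥ Φ^{n+1}(𝕀) Q⊥) ≤ tr(Q⊥ Φⁿ(𝕀) Q⊥). -/

import Mathlib

open Matrix
open scoped ComplexOrder

/-- The algebra of `d × d` complex matrices. -/
abbrev Mat (d : ℕ) := Matrix (Fin d) (Fin d) ℂ

/-- A linear map on matrices is positive if it maps positive semidefinite matrices to
positive semidefinite matrices. -/
def IsPositiveMap {d : ℕ} (Φ : Module.End ℂ (Mat d)) : Prop :=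
  ∀ X : Mat d, X.PosSemidef → (Φ X).PosSemidef

/-- A linear map on matrices is trace-preserving. -/
def IsTracePreserving {d : ℕ} (Φ : Module.End ℂ (Mat d)) : Prop :=
  ∀ X : Mat d, (Φ X).trace = X.trace

/-- The block-wise application `(Φ ⊗ id_n)(X)` of `Φ` to a matrix on `ℂ^d ⊗ ℂ^n`. -/
def blockApply {d : ℕ} (Φ : Module.End ℂ (Mat d)) (n : ℕ)
    (X : Matrix (Fin d × Fin n) (Fin d × Fin n) ℂ) :
    Matrix (Fin d × Fin n) (Fin d × Fin n) ℂ :=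
  Matrix.of fun p q => Φ (Matrix.of fun i j => X (i, p.2) (j, q.2)) p.1 q.1

/-- Complete positivity: `Φ ⊗ id_n` is positive for every `n`. -/
def IsCompletelyPositive {d : ℕ} (Φ : Module.End ℂ (Mat d)) : Prop :=
  ∀ (n : ℕ) (X : Matrix (Fin d × Fin n) (Fin d × Fin n) ℂ),
    X.PosSemidef → (blockApply Φ n X).PosSemidef

/-- The attractor (peripheral) subspace: the span of eigenvectors corresponding to
eigenvalues of modulus one. -/
noncomputable def attrSubspace {d : ℕ} (Φ : Module.End ℂ (Mat d)) : Submodule ℂ (Mat d) :=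
  ⨆ (μ : ℂ) (_ : ‖μ‖ = 1), Module.End.eigenspace Φ μ


section SqrtHelper
open scoped MatrixOrder

noncomputable def Matrix.PosSemidef.sqrt {d : ℕ} {A : Mat d} (_hA : A.PosSemidef) : Mat d :=
  CFC.sqrt A

lemma Matrix.PosSemidef.posSemidef_sqrt {d : ℕ} {A : Mat d} (hA : A.PosSemidef) :
    hA.sqrt.PosSemidef :=
  (CFC.sqrt_nonneg A).posSemidef

lemma Matrix.PosSemidef.sqrt_mul_self {d : ℕ} {A : Mat d} (hA : A.PosSemidef) :
    hA.sqrt * hA.sqrt = A :=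
  CFC.sqrt_mul_sqrt_self A hA.nonneg

end SqrtHelper

section Aux
open Filter

-- diagonal entries of PSD nonneg
lemma psd_diag_nonneg {d : ℕ} {A : Mat d} (hA : A.PosSemidef) (i : Fin d) : 0 ≤ A i i := by
  have h := hA.dotProduct_mulVec_nonneg (Pi.single i 1)
  simpa [dotProduct, mulVec, Pi.single_apply, Finset.mul_sum] using h

lemma psd_trace_nonneg {d : ℕ} {A : Mat d} (hA : A.PosSemidef) : 0 ≤ A.trace := by
  exact Finset.sum_nonneg fun i _ => psd_diag_nonneg hA i

lemma psd_trace_eq_zero {d : ℕ} {A : Mat d} (hA : A.PosSemidef) (h : A.trace = 0) : A = 0 := by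
  have hdiag : ∀ i, A i i = 0 := by
    intro i
    have := (Finset.sum_eq_zero_iff_of_nonneg (fun i _ => psd_diag_nonneg hA i)).mp h
    exact this i (Finset.mem_univ i)
  have hcol : ∀ i, A *ᵥ Pi.single i 1 = 0 := by
    intro i
    refine (hA.dotProduct_mulVec_zero_iff _).mp ?_
    have h' := hdiag i
    simpa [dotProduct, mulVec, Pi.single_apply, Finset.mul_sum] using h'
  ext i j
  have := congrFun (hcol j) i
  simpa [mulVec, dotProduct, Pi.single_apply] using this

lemma mat_eq_zero_of_mulVec {d : ℕ} {M : Mat d} (h : ∀ v, M *ᵥ v = 0) : M = 0 := by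
  ext i j
  have := congrFun (h (Pi.single j 1)) i
  simpa [mulVec, dotProduct, Pi.single_apply] using this

lemma psd_trace_mul_nonneg {d : ℕ} {A B : Mat d} (hA : A.PosSemidef) (hB : B.PosSemidef) :
    0 ≤ (A * B).trace := by
  classical
  set R := hB.sqrt with hRdef
  have hRpsd : R.PosSemidef := hB.posSemidef_sqrt
  have hRR : R * R = B := hB.sqrt_mul_self
  have hM : (Rᴴ * A * R).PosSemidef := hA.conjTranspose_mul_mul_same R
  have : (Rᴴ * A * R).trace = (A * B).trace := by
    rw [trace_mul_cycle, hRpsd.isHermitian.eq, hRR, trace_mul_comm]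
  exact this ▸ psd_trace_nonneg hM







lemma cp_pos {d : ℕ} {Φ : Module.End ℂ (Mat d)} (hCP : IsCompletelyPositive Φ) :
    IsPositiveMap Φ := by
  intro X hX
  have h := hCP 1 (X.submatrix Prod.fst Prod.fst) (hX.submatrix _)
  have heq : Φ X = (blockApply Φ 1 (X.submatrix Prod.fst Prod.fst)).submatrix
      (fun i : Fin d => (i, (0 : Fin 1))) (fun i : Fin d => (i, (0 : Fin 1))) := by
    ext i j
    simp only [submatrix_apply, blockApply, of_apply]
    congr 1
  rw [heq]
  exact h.submatrix _

lemma herm_decomp {d : ℕ} {H : Mat d} (hH : H.IsHermitian) :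
    ∃ A B : Mat d, A.PosSemidef ∧ B.PosSemidef ∧ H = A - B := by
  classical
  set U : Mat d := (hH.eigenvectorUnitary : Mat d) with hU
  refine ⟨U * diagonal (fun i => ((max (hH.eigenvalues i) 0 : ℝ) : ℂ)) * Uᴴ,
          U * diagonal (fun i => ((max (-hH.eigenvalues i) 0 : ℝ) : ℂ)) * Uᴴ, ?_, ?_, ?_⟩
  · exact (posSemidef_diagonal_iff.mpr fun i => by
      rw [Complex.zero_le_real]; exact le_max_right _ _).mul_mul_conjTranspose_same U
  · exact (posSemidef_diagonal_iff.mpr fun i => by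
      rw [Complex.zero_le_real]; exact le_max_right _ _).mul_mul_conjTranspose_same U
  · have hsp : H = U * diagonal (RCLike.ofReal ∘ hH.eigenvalues) * Uᴴ := by
      simpa [Matrix.star_eq_conjTranspose] using hH.spectral_theorem
    have hcomb : (U * diagonal (fun i => ((max (hH.eigenvalues i) 0 : ℝ) : ℂ)) * Uᴴ)
        - (U * diagonal (fun i => ((max (-hH.eigenvalues i) 0 : ℝ) : ℂ)) * Uᴴ)
        = U * diagonal (RCLike.ofReal ∘ hH.eigenvalues) * Uᴴ := by
      rw [← Matrix.sub_mul, ← Matrix.mul_sub, diagonal_sub]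
      refine congrArg (fun D => U * D * Uᴴ) ?_
      rw [diagonal_eq_diagonal_iff]
      intro i
      show ((max (hH.eigenvalues i) 0 : ℝ) : ℂ) - ((max (-hH.eigenvalues i) 0 : ℝ) : ℂ)
          = RCLike.ofReal (hH.eigenvalues i)
      rw [← Complex.ofReal_sub, max_zero_sub_max_neg_zero_eq_self]
      rfl
    rw [hcomb]
    exact hsp

lemma herm_map {d : ℕ} {Φ : Module.End ℂ (Mat d)} (hPos : IsPositiveMap Φ)
    {H : Mat d} (hH : H.IsHermitian) : (Φ H).IsHermitian := by
  obtain ⟨A, B, hA, hB, rfl⟩ := herm_decomp hH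
  rw [map_sub]
  exact (hPos A hA).isHermitian.sub (hPos B hB).isHermitian

lemma herm_pair {d : ℕ} {Φ : Module.End ℂ (Mat d)} (hPos : IsPositiveMap Φ)
    {H K : Mat d} (hH : H.IsHermitian) (hK : K.IsHermitian) :
    (Φ (H + Complex.I • K))ᴴ = Φ (H - Complex.I • K) := by
  rw [map_add, map_sub, _root_.map_smul, conjTranspose_add,
    conjTranspose_smul, (herm_map hPos hH).eq, (herm_map hPos hK).eq]
  have : (star Complex.I : ℂ) = -Complex.I := Complex.conj_I
  rw [this, neg_smul, ← sub_eq_add_neg]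

lemma adj_map {d : ℕ} {Φ : Module.End ℂ (Mat d)} (hPos : IsPositiveMap Φ)
    (X : Mat d) : Φ Xᴴ = (Φ X)ᴴ := by
  have hH : (((2 : ℂ)⁻¹) • (X + Xᴴ)).IsHermitian := by
    unfold Matrix.IsHermitian
    rw [conjTranspose_smul, conjTranspose_add, conjTranspose_conjTranspose]
    congr 1
    · simp
    · abel
  have hK : (((2 * Complex.I : ℂ)⁻¹) • (X - Xᴴ)).IsHermitian := by
    unfold Matrix.IsHermitian
    rw [conjTranspose_smul, conjTranspose_sub, conjTranspose_conjTranspose]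
    have h1 : (star ((2 * Complex.I : ℂ)⁻¹) : ℂ) = -(2 * Complex.I)⁻¹ := by
      simp [Complex.ext_iff]
    rw [h1, neg_smul, ← smul_neg, neg_sub]
  have hXdec : X = (((2 : ℂ)⁻¹) • (X + Xᴴ)) + Complex.I • (((2 * Complex.I : ℂ)⁻¹) • (X - Xᴴ)) := by
    match_scalars <;> (field_simp; try ring)
  have hXHdec : Xᴴ = (((2 : ℂ)⁻¹) • (X + Xᴴ)) - Complex.I • (((2 * Complex.I : ℂ)⁻¹) • (X - Xᴴ)) := by
    match_scalars <;> (field_simp; try ring)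
  calc Φ Xᴴ = Φ ((((2 : ℂ)⁻¹) • (X + Xᴴ)) - Complex.I • (((2 * Complex.I : ℂ)⁻¹) • (X - Xᴴ))) :=
        congrArg _ hXHdec
    _ = (Φ ((((2 : ℂ)⁻¹) • (X + Xᴴ)) + Complex.I • (((2 * Complex.I : ℂ)⁻¹) • (X - Xᴴ))))ᴴ :=
        (herm_pair hPos hH hK).symm
    _ = (Φ X)ᴴ := by rw [← hXdec]

noncomputable def PhiStar {d : ℕ} (Φ : Module.End ℂ (Mat d)) (Y : Mat d) : Mat d :=
  Matrix.of fun a b => (Y * Φ (Matrix.single b a 1)).trace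

lemma phiStar_adj {d : ℕ} (Φ : Module.End ℂ (Mat d)) (Y X : Mat d) :
    (Y * Φ X).trace = (PhiStar Φ Y * X).trace := by
  conv_lhs => rw [matrix_eq_sum_single X]
  have hsb : ∀ (i j : Fin d), Matrix.single i j (X i j) = X i j • Matrix.single i j (1:ℂ) := by
    intro i j; rw [smul_single, smul_eq_mul, mul_one]
  simp only [hsb, map_sum, _root_.map_smul, Finset.mul_sum, Matrix.mul_sum, trace_sum,
    Matrix.mul_smul, trace_smul, smul_eq_mul]
  rw [Matrix.trace]
  simp only [PhiStar, Matrix.diag_apply, Matrix.mul_apply, of_apply, Finset.sum_mul]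
  rw [Finset.sum_comm]
  refine Finset.sum_congr rfl fun i _ => Finset.sum_congr rfl fun j _ => ?_
  ring

lemma quadform_eq_trace {d : ℕ} (M : Mat d) (x : Fin d → ℂ) :
    star x ⬝ᵥ M *ᵥ x = (M * vecMulVec x (star x)).trace := by
  rw [Matrix.trace]
  simp only [Matrix.diag_apply, Matrix.mul_apply, vecMulVec_apply, dotProduct, mulVec,
    Pi.star_apply, Finset.mul_sum]
  refine Finset.sum_congr rfl fun i _ => Finset.sum_congr rfl fun j _ => ?_
  ring

lemma vecMulVec_psd {d : ℕ} (x : Fin d → ℂ) : (vecMulVec x (star x)).PosSemidef := by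
  have : vecMulVec x (star x) = replicateCol (Fin 1) x * (replicateCol (Fin 1) x)ᴴ := by
    rw [conjTranspose_replicateCol, vecMulVec_eq (Fin 1)]
    rfl
  rw [this]
  exact posSemidef_self_mul_conjTranspose _

lemma phiStar_pos {d : ℕ} {Φ : Module.End ℂ (Mat d)}
    (hPos : ∀ X : Mat d, X.PosSemidef → (Φ X).PosSemidef)
    (hAdj : ∀ X : Mat d, Φ Xᴴ = (Φ X)ᴴ)
    {Y : Mat d} (hY : Y.PosSemidef) : (PhiStar Φ Y).PosSemidef := by
  have htr : ∀ {A B : Mat d}, A.PosSemidef → B.PosSemidef → 0 ≤ (A * B).trace :=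
    fun hA hB => psd_trace_mul_nonneg hA hB
  refine Matrix.PosSemidef.of_dotProduct_mulVec_nonneg ?_ ?_
  · ext a b
    show star (PhiStar Φ Y b a) = PhiStar Φ Y a b
    show star ((Y * Φ (Matrix.single a b 1)).trace) = (Y * Φ (Matrix.single b a 1)).trace
    rw [← trace_conjTranspose, conjTranspose_mul, ← hAdj, hY.isHermitian.eq]
    have hE : (Matrix.single a b (1:ℂ))ᴴ = Matrix.single b a 1 := by
      ext i j
      simp [Matrix.single, conjTranspose_apply, and_comm]
    rw [hE, trace_mul_comm]
  · intro x
    rw [quadform_eq_trace, ← phiStar_adj]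
    exact htr hY (hPos _ (vecMulVec_psd x))

lemma inv_nat_tendsto : Tendsto (fun N : ℕ => ((N : ℂ))⁻¹) atTop (nhds 0) := by
  have h : Tendsto (fun N : ℕ => ((N : ℝ))⁻¹) atTop (nhds 0) :=
    tendsto_inv_atTop_zero.comp tendsto_natCast_atTop_atTop
  have := (Complex.continuous_ofReal.tendsto 0).comp h
  refine this.congr fun N => ?_
  simp [Function.comp]

lemma psd_limit {d : ℕ} {f : ℕ → Mat d} {A : Mat d} (h : Tendsto f atTop (nhds A))
    (hf : ∀ᶠ N in atTop, (f N).PosSemidef) : A.PosSemidef := by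
  have hent : ∀ i j, Tendsto (fun N => f N i j) atTop (nhds (A i j)) := by
    intro i j
    exact (tendsto_pi_nhds.mp (tendsto_pi_nhds.mp h i)) j
  refine Matrix.PosSemidef.of_dotProduct_mulVec_nonneg ?_ ?_
  · ext i j
    rw [conjTranspose_apply]
    have h1 : Tendsto (fun N => star (f N j i)) atTop (nhds (star (A j i))) :=
      (continuous_star.tendsto _).comp (hent j i)
    have h2 : Tendsto (fun N => star (f N j i)) atTop (nhds (A i j)) := by
      refine (hent i j).congr' ?_
      filter_upwards [hf] with N hN
      rw [← conjTranspose_apply, hN.isHermitian.eq]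
    exact tendsto_nhds_unique h1 h2
  · intro x
    have hq : Tendsto (fun N => star x ⬝ᵥ (f N) *ᵥ x) atTop (nhds (star x ⬝ᵥ A *ᵥ x)) := by
      simp only [dotProduct, mulVec]
      refine tendsto_finset_sum _ fun i _ => ?_
      refine Tendsto.const_mul _ ?_
      refine tendsto_finset_sum _ fun j _ => ?_
      exact (hent i j).mul_const _
    have hcl : IsClosed {z : ℂ | 0 ≤ z} := by
      have : {z : ℂ | 0 ≤ z} = Complex.re ⁻¹' Set.Ici 0 ∩ Complex.im ⁻¹' {0} := by
        ext z
        simp [Complex.le_def, eq_comm]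
      rw [this]
      exact (isClosed_Ici.preimage Complex.continuous_re).inter
        (isClosed_singleton.preimage Complex.continuous_im)
    exact hcl.mem_of_tendsto hq (by filter_upwards [hf] with N hN using hN.dotProduct_mulVec_nonneg x)

lemma psd_real_smul {d : ℕ} {A : Mat d} (hA : A.PosSemidef) {c : ℝ} (hc : 0 ≤ c) :
    (((c : ℂ)) • A).PosSemidef := by
  refine Matrix.PosSemidef.of_dotProduct_mulVec_nonneg ?_ ?_
  · unfold Matrix.IsHermitian
    rw [conjTranspose_smul, hA.isHermitian.eq]
    congr 1
    simp
  · intro x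
    rw [smul_mulVec, dotProduct_smul, smul_eq_mul]
    exact mul_nonneg (by rw [Complex.zero_le_real]; exact hc) (hA.dotProduct_mulVec_nonneg x)

lemma pow_one_psd {d : ℕ} {Φ : Module.End ℂ (Mat d)}
    (hPos : ∀ X : Mat d, X.PosSemidef → (Φ X).PosSemidef) :
    ∀ n : ℕ, (((Φ ^ n) (1 : Mat d)).PosSemidef)
  | 0 => by simpa using (Matrix.PosSemidef.one : (1 : Mat d).PosSemidef)
  | (n + 1) => by
    rw [pow_succ', Module.End.mul_apply]
    exact hPos _ (pow_one_psd hPos n)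

noncomputable def cesG {d : ℕ} (Φ : Module.End ℂ (Mat d)) (N : ℕ) : Mat d :=
  ∑ n ∈ Finset.Icc 1 N, (Φ ^ n) (1 : Mat d)

lemma cesG_succ {d : ℕ} (Φ : Module.End ℂ (Mat d)) (N : ℕ) :
    cesG Φ (N + 1) = cesG Φ N + (Φ ^ (N + 1)) (1 : Mat d) := by
  unfold cesG
  rw [Finset.sum_Icc_succ_top (by omega : 1 ≤ N + 1)]

lemma cesaro_facts {d : ℕ} (Φ P : Module.End ℂ (Mat d))
    (hPos : ∀ X : Mat d, X.PosSemidef → (Φ X).PosSemidef)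
    (hlim : ∀ X : Mat d,
      Filter.Tendsto (fun N : ℕ => (N : ℂ)⁻¹ • (∑ n ∈ Finset.Icc 1 N, Φ ^ n) X)
        Filter.atTop (nhds (P X))) :
    Φ (P (1 : Mat d)) = P (1 : Mat d) ∧ (P (1 : Mat d)).PosSemidef := by
  have hf : Tendsto (fun N : ℕ => (N : ℂ)⁻¹ • cesG Φ N) atTop (nhds (P 1)) := by
    refine (hlim 1).congr fun N => ?_
    simp [cesG, LinearMap.sum_apply]
  have hgpsd : ∀ N, (cesG Φ N).PosSemidef := by
    intro N
    induction N with
    | zero =>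
      have : cesG Φ 0 = 0 := by simp [cesG]
      rw [this]; exact Matrix.PosSemidef.zero
    | succ N ih =>
      rw [cesG_succ]
      exact ih.add (pow_one_psd hPos (N + 1))
  have hfpsd : ∀ N : ℕ, ((N : ℂ)⁻¹ • cesG Φ N).PosSemidef := by
    intro N
    have h0 : ((N : ℂ))⁻¹ = (((N : ℝ)⁻¹ : ℝ) : ℂ) := by push_cast; ring
    rw [h0]
    exact psd_real_smul (hgpsd N) (by positivity)
  have hPpsd : (P (1 : Mat d)).PosSemidef := psd_limit hf (Filter.Eventually.of_forall hfpsd)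
  have hg : ∀ N, Φ (cesG Φ N) = cesG Φ (N + 1) - Φ (1 : Mat d) := by
    intro N
    induction N with
    | zero =>
      have h0 : cesG Φ 0 = 0 := by simp [cesG]
      have h1 : cesG Φ 1 = Φ (1 : Mat d) := by simp [cesG]
      rw [h0, h1, map_zero, sub_self]
    | succ N ih =>
      rw [cesG_succ, map_add, ih, cesG_succ Φ (N + 1)]
      have : (Φ ^ (N + 2)) (1 : Mat d) = Φ ((Φ ^ (N + 1)) 1) := by
        rw [pow_succ', Module.End.mul_apply]
      rw [this]
      abel
  have hmain : ∀ N : ℕ, Φ ((N : ℂ)⁻¹ • cesG Φ N) =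
      ((N : ℂ)⁻¹ * ((N : ℂ) + 1)) • (((N + 1 : ℕ) : ℂ)⁻¹ • cesG Φ (N + 1))
        - (N : ℂ)⁻¹ • Φ (1 : Mat d) := by
    intro N
    have hcast : (((N + 1 : ℕ)) : ℂ) = (N : ℂ) + 1 := by push_cast; ring
    have hne : ((N : ℂ) + 1) ≠ 0 := by
      rw [← hcast]
      exact_mod_cast Nat.succ_ne_zero N
    rw [hcast, _root_.map_smul, hg N, smul_sub, smul_smul]
    congr 2
    rw [mul_assoc, mul_inv_cancel₀ hne, mul_one]
  have hc : Tendsto (fun N : ℕ => (N : ℂ)⁻¹ * ((N : ℂ) + 1)) atTop (nhds 1) := by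
    have h1 : Tendsto (fun N : ℕ => 1 + (N : ℂ)⁻¹) atTop (nhds (1 + 0)) :=
      tendsto_const_nhds.add inv_nat_tendsto
    rw [add_zero] at h1
    refine h1.congr' ?_
    filter_upwards [eventually_ge_atTop 1] with N hN
    have hne : ((N : ℂ)) ≠ 0 := by
      simpa using (by omega : N ≠ 0)
    field_simp
  have hshift : Tendsto (fun N : ℕ => ((N + 1 : ℕ) : ℂ)⁻¹ • cesG Φ (N + 1)) atTop (nhds (P 1)) :=
    hf.comp (tendsto_add_atTop_nat 1)
  have hRHS : Tendsto (fun N : ℕ =>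
      ((N : ℂ)⁻¹ * ((N : ℂ) + 1)) • (((N + 1 : ℕ) : ℂ)⁻¹ • cesG Φ (N + 1))
        - (N : ℂ)⁻¹ • Φ (1 : Mat d)) atTop
      (nhds ((1 : ℂ) • P (1 : Mat d) - (0 : ℂ) • Φ (1 : Mat d))) :=
    (hc.smul hshift).sub (inv_nat_tendsto.smul tendsto_const_nhds)
  have hLHS : Tendsto (fun N : ℕ => Φ ((N : ℂ)⁻¹ • cesG Φ N)) atTop (nhds (Φ (P 1))) :=
    (Φ.continuous_of_finiteDimensional.tendsto (P 1)).comp hf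
  have hkey : Φ (P (1 : Mat d)) = (1 : ℂ) • P (1 : Mat d) - (0 : ℂ) • Φ (1 : Mat d) :=
    tendsto_nhds_unique hLHS (hRHS.congr fun N => (hmain N).symm)
  rw [one_smul, zero_smul, sub_zero] at hkey
  exact ⟨hkey, hPpsd⟩

lemma phiStar_sub_one {d : ℕ} (Φ : Module.End ℂ (Mat d)) (hTP : IsTracePreserving Φ)
    (Y : Mat d) : PhiStar Φ ((1 : Mat d) - Y) = 1 - PhiStar Φ Y := by
  ext a b
  show (((1 : Mat d) - Y) * Φ (Matrix.single b a 1)).trace = ((1 : Mat d) - PhiStar Φ Y) a b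
  rw [Matrix.sub_mul, trace_sub, Matrix.one_mul, hTP]
  have h1 : (Matrix.single b a (1 : ℂ)).trace = (1 : Mat d) a b := by
    rcases eq_or_ne a b with rfl | hab
    · simp [Matrix.trace, Matrix.diag, Matrix.single, Matrix.one_apply]
    · have hz : ∀ i : Fin d, (if b = i ∧ a = i then (1 : ℂ) else 0) = 0 := by
        intro i
        rw [if_neg]
        rintro ⟨rfl, rfl⟩
        exact hab rfl
      simp [Matrix.trace, Matrix.diag, Matrix.single, Matrix.one_apply, hab, hz]
  rw [h1, Matrix.sub_apply]
  rfl

end Aux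

/-- Let `Φ` be a quantum channel, `P` its Cesàro limit projection, and
`Qp` the orthogonal projection onto the orthogonal complement of `H₀ = range P(𝕀)`.
Then `n ↦ tr(Qp Φⁿ(𝕀) Qp)` is non-increasing. -/
theorem trace_Qperp_monotone
    (d : ℕ) (Φ P : Module.End ℂ (Mat d))
    (hCP : IsCompletelyPositive Φ) (hTP : IsTracePreserving Φ)
    (hlim : ∀ X : Mat d,
      Filter.Tendsto (fun N : ℕ => (N : ℂ)⁻¹ • (∑ n ∈ Finset.Icc 1 N, Φ ^ n) X)
        Filter.atTop (nhds (P X)))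
    (Qp : Mat d) (hQH : Qp.IsHermitian) (hQ2 : Qp * Qp = Qp)
    (hQker : ∀ v : Fin d → ℂ,
      Qp.mulVec v = 0 ↔ v ∈ LinearMap.range (Matrix.mulVecLin (P (1 : Mat d)))) :
    ∀ n : ℕ,
      (Qp * (Φ ^ (n + 1)) (1 : Mat d) * Qp).trace ≤
        (Qp * (Φ ^ n) (1 : Mat d) * Qp).trace := by
  
  -- setup
  have hPos : IsPositiveMap Φ := cp_pos hCP
  have hAdj : ∀ X : Mat d, Φ Xᴴ = (Φ X)ᴴ := adj_map hPos
  obtain ⟨hfix, hσ⟩ := cesaro_facts Φ P hPos hlim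
  have hQpPSD : Qp.PosSemidef := by
    have h := posSemidef_conjTranspose_mul_self Qp
    rwa [hQH.eq, hQ2] at h
  have hBpsd : (PhiStar Φ Qp).PosSemidef := phiStar_pos hPos hAdj hQpPSD
  -- Qp * σ = 0
  have hQσ : Qp * P (1 : Mat d) = 0 := by
    refine mat_eq_zero_of_mulVec fun v => ?_
    rw [← mulVec_mulVec]
    exact (hQker _).mpr ⟨v, rfl⟩
  -- trace (B * σ) = 0
  have htrBσ : (PhiStar Φ Qp * P (1 : Mat d)).trace = 0 := by
    rw [← phiStar_adj, hfix, hQσ, trace_zero]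
  -- B * σ = 0
  have hBσ : PhiStar Φ Qp * P (1 : Mat d) = 0 := by
    have hRH : (hBpsd.sqrt)ᴴ = hBpsd.sqrt := hBpsd.posSemidef_sqrt.isHermitian.eq
    have hSH : (hσ.sqrt)ᴴ = hσ.sqrt := hσ.posSemidef_sqrt.isHermitian.eq
    have hRR : hBpsd.sqrt * hBpsd.sqrt = PhiStar Φ Qp := hBpsd.sqrt_mul_self
    have hSS : hσ.sqrt * hσ.sqrt = P (1 : Mat d) := hσ.sqrt_mul_self
    have hMpsd : ((hBpsd.sqrt)ᴴ * P (1 : Mat d) * hBpsd.sqrt).PosSemidef :=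
      hσ.conjTranspose_mul_mul_same _
    have htrM : ((hBpsd.sqrt)ᴴ * P (1 : Mat d) * hBpsd.sqrt).trace = 0 := by
      rw [trace_mul_cycle, hRH, hRR, htrBσ]
    have hM0 : (hBpsd.sqrt)ᴴ * P (1 : Mat d) * hBpsd.sqrt = 0 := psd_trace_eq_zero hMpsd htrM
    rw [hRH] at hM0
    have h1 : (hσ.sqrt * hBpsd.sqrt)ᴴ * (hσ.sqrt * hBpsd.sqrt) = 0 := by
      rw [conjTranspose_mul, hRH, hSH]
      calc hBpsd.sqrt * hσ.sqrt * (hσ.sqrt * hBpsd.sqrt)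
          = hBpsd.sqrt * (hσ.sqrt * hσ.sqrt) * hBpsd.sqrt := by
            rw [Matrix.mul_assoc, Matrix.mul_assoc, Matrix.mul_assoc]
        _ = hBpsd.sqrt * P (1 : Mat d) * hBpsd.sqrt := by rw [hSS]
        _ = 0 := hM0
    have hSR : hσ.sqrt * hBpsd.sqrt = 0 := conjTranspose_mul_self_eq_zero.mp h1
    have hRS : hBpsd.sqrt * hσ.sqrt = 0 := by
      have h2 := congrArg conjTranspose hSR
      rwa [conjTranspose_mul, hRH, hSH, conjTranspose_zero] at h2
    calc PhiStar Φ Qp * P (1 : Mat d)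
        = hBpsd.sqrt * hBpsd.sqrt * (hσ.sqrt * hσ.sqrt) := by rw [hRR, hSS]
      _ = hBpsd.sqrt * (hBpsd.sqrt * hσ.sqrt) * hσ.sqrt := by
          rw [Matrix.mul_assoc, Matrix.mul_assoc, Matrix.mul_assoc]
      _ = 0 := by rw [hRS, Matrix.mul_zero, Matrix.zero_mul]
  -- B * (1 - Qp) = 0
  have hBQ : PhiStar Φ Qp * ((1 : Mat d) - Qp) = 0 := by
    refine mat_eq_zero_of_mulVec fun v => ?_
    have hker : Qp *ᵥ (((1 : Mat d) - Qp) *ᵥ v) = 0 := by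
      rw [mulVec_mulVec]
      have : Qp * ((1 : Mat d) - Qp) = 0 := by
        rw [Matrix.mul_sub, Matrix.mul_one, hQ2, sub_self]
      rw [this, zero_mulVec]
    obtain ⟨w, hw⟩ := (hQker _).mp hker
    rw [← mulVec_mulVec, ← hw]
    show PhiStar Φ Qp *ᵥ (P (1 : Mat d)).mulVecLin w = 0
    rw [mulVecLin_apply, mulVec_mulVec, hBσ, zero_mulVec]
  have hQB : ((1 : Mat d) - Qp) * PhiStar Φ Qp = 0 := by
    have h2 := congrArg conjTranspose hBQ
    rwa [conjTranspose_mul, conjTranspose_sub, conjTranspose_one, hQH.eq,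
      hBpsd.isHermitian.eq, conjTranspose_zero] at h2
  -- Qp * B * Qp = B
  have hQpB : Qp * PhiStar Φ Qp = PhiStar Φ Qp := by
    have h2 : PhiStar Φ Qp - Qp * PhiStar Φ Qp = 0 := by
      rw [← Matrix.one_mul (PhiStar Φ Qp), ← Matrix.mul_assoc, Matrix.mul_one, ← Matrix.sub_mul]
      exact hQB
    rw [sub_eq_zero] at h2
    exact h2.symm
  have hBQp : PhiStar Φ Qp * Qp = PhiStar Φ Qp := by
    have h2 : PhiStar Φ Qp - PhiStar Φ Qp * Qp = 0 := by
      rw [← Matrix.mul_one (PhiStar Φ Qp), Matrix.mul_assoc, Matrix.one_mul, ← Matrix.mul_sub]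
      exact hBQ
    rw [sub_eq_zero] at h2
    exact h2.symm
  have hB_eq : Qp * PhiStar Φ Qp * Qp = PhiStar Φ Qp := by rw [hQpB, hBQp]
  -- 1 - B is PSD
  have h1mQp : ((1 : Mat d) - Qp).PosSemidef := by
    have h := posSemidef_conjTranspose_mul_self ((1 : Mat d) - Qp)
    have hherm : ((1 : Mat d) - Qp)ᴴ = (1 : Mat d) - Qp := by
      rw [conjTranspose_sub, conjTranspose_one, hQH.eq]
    have hidem : ((1 : Mat d) - Qp) * ((1 : Mat d) - Qp) = (1 : Mat d) - Qp := by
      rw [Matrix.sub_mul, Matrix.one_mul, Matrix.mul_sub, Matrix.mul_one, hQ2, sub_self, sub_zero]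
    rwa [hherm, hidem] at h
  have h1mB : ((1 : Mat d) - PhiStar Φ Qp).PosSemidef := by
    rw [← phiStar_sub_one Φ hTP Qp]
    exact phiStar_pos hPos hAdj h1mQp
  -- Qp - B is PSD
  have hQmB : (Qp - PhiStar Φ Qp).PosSemidef := by
    have h2 := h1mB.mul_mul_conjTranspose_same Qp
    rw [hQH.eq] at h2
    have h3 : Qp * ((1 : Mat d) - PhiStar Φ Qp) * Qp = Qp - PhiStar Φ Qp := by
      rw [Matrix.mul_sub, Matrix.mul_one, Matrix.sub_mul, hQ2, hB_eq]
    rwa [h3] at h2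
  -- final chain
  intro n
  have hA : ((Φ ^ n) (1 : Mat d)).PosSemidef := pow_one_psd hPos n
  have e1 : (Qp * (Φ ^ (n + 1)) (1 : Mat d) * Qp).trace
      = (PhiStar Φ Qp * ((Φ ^ n) (1 : Mat d))).trace := by
    rw [trace_mul_cycle, hQ2]
    have h5 : (Φ ^ (n + 1)) (1 : Mat d) = Φ ((Φ ^ n) 1) := by
      rw [pow_succ', Module.End.mul_apply]
    rw [h5, phiStar_adj]
  have e2 : (Qp * (Φ ^ n) (1 : Mat d) * Qp).trace = (Qp * ((Φ ^ n) (1 : Mat d))).trace := by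
    rw [trace_mul_cycle, hQ2]
  rw [e1, e2]
  have h4 : 0 ≤ ((Qp - PhiStar Φ Qp) * ((Φ ^ n) (1 : Mat d))).trace :=
    psd_trace_mul_nonneg hQmB hA
  rw [Matrix.sub_mul, trace_sub] at h4
  exact sub_nonneg.mp h4
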